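/- (Commutant characterization of locality.) Let D ⊆ ℤ^n be a finite subset and T a bounded operator on H. Then T is local upon D if and only if T commutes with every bounded operator A on H for which there exists y ∈ ℤ^n with y ∉ D such that A is local upon {y}. -/

import Mathlib

open scoped ENNReal

noncomputable section

namespace QCA

abbrev Lat (n : ℕ) : Type := Fin n → ℤ

def Conf (n : ℕ) (A : Type*) (q0 : A) : Type _ :=
  {c : Lat n → A // {x : Lat n | c x ≠ q0}.Finite}

def c0 (n : ℕ) (A : Type*) (q0 : A) : Conf n A q0 :=
  ⟨fun _ => q0, by simp⟩

abbrev H (n : ℕ) (A : Type*) (q0 : A) : Type _ := lp (fun _ : Conf n A q0 => ℂ) 2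

def eVec {n : ℕ} {A : Type*} {q0 : A} (c : Conf n A q0) : H n A q0 :=
  letI : DecidableEq (Conf n A q0) := Classical.decEq _
  lp.single 2 c 1

/-- Translation of a configuration by `z`: the configuration `x ↦ c (x + z)`. -/
def shiftConf {n : ℕ} {A : Type*} {q0 : A} (z : Lat n) (c : Conf n A q0) : Conf n A q0 :=
  ⟨fun x => c.1 (x + z), by
    have h : {x : Lat n | c.1 (x + z) ≠ q0} ⊆ (fun x : Lat n => x + z) ⁻¹' {x | c.1 x ≠ q0} :=
      fun x hx => hx
    exact (c.2.preimage ((add_left_injective z).injOn)).subset h⟩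

/-- Translation by `z` as a permutation of the set of finite configurations. -/
def shiftEquiv {n : ℕ} {A : Type*} (q0 : A) (z : Lat n) : Conf n A q0 ≃ Conf n A q0 where
  toFun := shiftConf z
  invFun := shiftConf (-z)
  left_inv c := Subtype.ext (funext fun x => by
    show c.1 (x + -z + z) = c.1 x
    rw [neg_add_cancel_right])
  right_inv c := Subtype.ext (funext fun x => by
    show c.1 (x + z + -z) = c.1 x
    rw [add_neg_cancel_right])

theorem memℓp_comp_equiv {ι κ : Type*} (e : κ ≃ ι) {f : ι → ℂ} (hf : Memℓp f 2) :
    Memℓp (fun k => f (e k)) 2 := by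
  have hp : 0 < (2 : ℝ≥0∞).toReal := by norm_num
  exact memℓp_gen ((e.summable_iff
    (f := fun i => ‖f i‖ ^ (2 : ℝ≥0∞).toReal)).mpr (hf.summable hp))

/-- The unitary operator on `ℓ²` induced by a permutation of the index set. -/
def lpCongr {ι κ : Type*} (e : ι ≃ κ) :
    lp (fun _ : ι => ℂ) 2 ≃ₗᵢ[ℂ] lp (fun _ : κ => ℂ) 2 where
  toLinearEquiv :=
    { toFun := fun f => ⟨fun k => f (e.symm k), memℓp_comp_equiv e.symm (lp.memℓp f)⟩
      map_add' := fun f g => lp.ext (funext fun k => by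
        simp [lp.coeFn_add] <;> rfl)
      map_smul' := fun r f => lp.ext (funext fun k => by
        simp [lp.coeFn_smul])
      invFun := fun g => ⟨fun i => g (e i), memℓp_comp_equiv e (lp.memℓp g)⟩
      left_inv := fun f => lp.ext (funext fun i => by simp)
      right_inv := fun g => lp.ext (funext fun k => by simp) }
  norm_map' := fun f => by
    have hp : 0 < (2 : ℝ≥0∞).toReal := by norm_num
    rw [lp.norm_eq_tsum_rpow hp, lp.norm_eq_tsum_rpow hp]
    congr 1
    exact e.symm.tsum_eq (fun i => ‖f i‖ ^ (2 : ℝ≥0∞).toReal)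

/-- The translation operator `τ_z` on the Hilbert space of finite configurations. -/
def tau {n : ℕ} {A : Type*} (q0 : A) (z : Lat n) : H n A q0 ≃ₗᵢ[ℂ] H n A q0 :=
  lpCongr (shiftEquiv q0 z)

/-- A bounded operator on `H` is translation invariant if `τ_z ∘ M ∘ τ_z⁻¹ = M` for all `z`. -/
def TranslationInvariant {n : ℕ} {A : Type*} (q0 : A) (M : H n A q0 →L[ℂ] H n A q0) : Prop :=
  ∀ (z : Lat n) (v : H n A q0), tau q0 z (M ((tau q0 z).symm v)) = M v


section Local

variable {n : ℕ} {A : Type*} [Fintype A]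

/-- The configuration agreeing with `f` on `D` and with `c` outside `D`. -/
def override {q0 : A} (D : Finset (Lat n)) (f : {x // x ∈ D} → A) (c : Conf n A q0) :
    Conf n A q0 :=
  ⟨fun x => if h : x ∈ D then f ⟨x, h⟩ else c.1 x, by
    refine Set.Finite.subset (Set.Finite.union D.finite_toSet c.2) ?_
    intro x hx
    rcases Decidable.em (x ∈ D) with h | h
    · exact Set.mem_union_left _ h
    · exact Set.mem_union_right _ (by simpa [h] using hx)⟩

/-- A bounded operator on the Hilbert space of finite configurations is local upon the finite
set `D` of cells if its action on basis vectors only modifies, and only reads, the cells in `D`. -/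
def IsLocalUpon (q0 : A) (D : Finset (Lat n)) (T : H n A q0 →L[ℂ] H n A q0) : Prop :=
  ∃ a : ({x // x ∈ D} → A) → ({x // x ∈ D} → A) → ℂ, ∀ c : Conf n A q0,
    T (eVec c) = ∑ f : {x // x ∈ D} → A,
      a f (fun x => c.1 x.1) • eVec (override D f c)

/-- The neighborhood of the cell `x`: `𝒩_x = {x + k : k ∈ 𝒩}`. -/
def nbhd {n : ℕ} (𝒩 : Finset (Lat n)) (x : Lat n) : Finset (Lat n) :=
  𝒩.image (fun k => x + k)

/-- The reflected neighborhood of the cell `x`: `𝒱_x = {x - k : k ∈ 𝒩}`. -/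
def rnbhd {n : ℕ} (𝒩 : Finset (Lat n)) (x : Lat n) : Finset (Lat n) :=
  𝒩.image (fun k => x - k)

/-- A unitary `M` is causal relative to the neighborhood `𝒩` if conjugation `M† A M` maps
operators local upon a cell `x` to operators local upon `𝒩_x`. -/
def Causal (q0 : A) (𝒩 : Finset (Lat n)) (M : H n A q0 →L[ℂ] H n A q0) : Prop :=
  ∀ (x : Lat n) (B : H n A q0 →L[ℂ] H n A q0), IsLocalUpon q0 {x} B →
    IsLocalUpon q0 (nbhd 𝒩 x) (ContinuousLinearMap.adjoint M ∘L B ∘L M)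

end Local

/-- The standard basis vector of the one-cell Hilbert space `ℂ^A`. -/
def wVec (A : Type*) [Fintype A] (a : A) : EuclideanSpace ℂ A :=
  letI : DecidableEq A := Classical.decEq A
  EuclideanSpace.single a 1

/-- The configuration obtained from `c` by replacing the value at the cell `x` by `r`. -/
def updateConf {n : ℕ} {A : Type*} {q0 : A} (x : Lat n) (r : A) (c : Conf n A q0) :
    Conf n A q0 :=
  ⟨Function.update c.1 x r, by
    refine Set.Finite.subset (c.2.union (Set.finite_singleton x)) ?_
    intro y hy
    rcases eq_or_ne y x with rfl | hxy
    · exact Set.mem_union_right _ rfl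
    · exact Set.mem_union_left _ (by
        simpa [Function.update_of_ne hxy] using hy)⟩

/-- The subalgebra `𝔇_{y,x}` of `End(ℂ^A)`: endomorphisms `a` of the one-cell Hilbert space
such that the operator `ι_x(a)` local upon `{x}` implementing `a` at the cell `x` is of the form
`R† B R` for some operator `B` local upon `{x - y}`. -/
def Dset {n : ℕ} {A : Type*} [Fintype A] (q0 : A)
    (R : H n A q0 →L[ℂ] H n A q0) (y x : Lat n) :
    Set (Module.End ℂ (EuclideanSpace ℂ A)) :=
  {a | ∃ B : H n A q0 →L[ℂ] H n A q0, IsLocalUpon q0 {x - y} B ∧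
    ∀ c : Conf n A q0,
      (ContinuousLinearMap.adjoint R ∘L B ∘L R) (eVec c) =
        ∑ q : A, (inner ℂ (wVec A q) (a (wVec A (c.1 x))) : ℂ) • eVec (updateConf x q c)}



section Component

variable {n : ℕ} {𝒩 : Finset (Lat n)} {K : {z // z ∈ 𝒩} → Type*}

/-- The propagation map on configurations in component form:
`(s c) x z = (c (x + z)) z`. -/
def sConf (qz : ∀ z : {z // z ∈ 𝒩}, K z) (c : Conf n (∀ z : {z // z ∈ 𝒩}, K z) qz) :
    Conf n (∀ z : {z // z ∈ 𝒩}, K z) qz :=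
  ⟨fun x z => c.1 (x + z.1) z, by
    refine Set.Finite.subset
      (Set.finite_iUnion (fun z : {z // z ∈ 𝒩} =>
        (c.2.preimage ((add_left_injective z.1).injOn)))) ?_
    intro x hx
    obtain ⟨z, hz⟩ := Function.ne_iff.mp hx
    exact Set.mem_iUnion.2 ⟨z, fun h => hz (congrFun h z)⟩⟩

end Component

/-- The support of a finite configuration, as a `Finset`. -/
def suppF {n : ℕ} {A : Type*} {q0 : A} (c : Conf n A q0) : Finset (Lat n) :=
  c.2.toFinset

/-- The property characterizing the local isomorphism `S̃ : H → Ĥ` induced by a one-cell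
unitary `S : W → Ŵ`. -/
def StildeProp {n : ℕ} {A B : Type*} [Fintype A] [Fintype B] (q0 : A) (qh : B)
    (Slin : EuclideanSpace ℂ A ≃ₗᵢ[ℂ] EuclideanSpace ℂ B)
    (St : H n A q0 ≃ₗᵢ[ℂ] H n B qh) : Prop :=
  ∀ c : Conf n A q0,
    St (eVec c) = ∑ g : {x // x ∈ suppF c} → B,
      (∏ x : {x // x ∈ suppF c}, (inner ℂ (wVec B (g x)) (Slin (wVec A (c.1 x.1))) : ℂ)) •
        eVec (override (suppF c) g (c0 n B qh))

/-- An endomorphism of the one-cell Hilbert space `ℂ^P`, `P = Π_{z ∈ 𝒩} K z`, acting only on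
the `y`-th coordinate. -/
def ActsOnCoord {n : ℕ} {𝒩 : Finset (Lat n)} {K : {z // z ∈ 𝒩} → Type*}
    [∀ z, Fintype (K z)] (y : {z // z ∈ 𝒩})
    (Aop : Module.End ℂ (EuclideanSpace ℂ (∀ z : {z // z ∈ 𝒩}, K z))) : Prop :=
  ∃ f : K y → K y → ℂ, ∀ p p' : ∀ z : {z // z ∈ 𝒩}, K z,
    ((∀ z : {z // z ∈ 𝒩}, z ≠ y → p z = p' z) →
      (inner ℂ (wVec _ p) (Aop (wVec _ p')) : ℂ) = f (p y) (p' y)) ∧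
    (¬ (∀ z : {z // z ∈ 𝒩}, z ≠ y → p z = p' z) →
      (inner ℂ (wVec _ p) (Aop (wVec _ p')) : ℂ) = 0)

/-- A factorization of the module `W` as a tensor product `⨂_{k} V k` carrying the sets of
endomorphisms `Dsets k` onto the endomorphisms acting on the `k`-th tensor factor alone. -/
structure PiTensorFactorization (ι : Type) [Fintype ι] [DecidableEq ι]
    (W : Type*) [AddCommGroup W] [Module ℂ W]
    (Dsets : ι → Set (Module.End ℂ W)) : Type _ where
  /-- The tensor factors. -/
  V : ι → Type
  [grp : ∀ k, AddCommGroup (V k)]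
  [mod : ∀ k, Module ℂ (V k)]
  fin : ∀ k, FiniteDimensional ℂ (V k)
  /-- The linear isomorphism with the tensor product. -/
  S : W ≃ₗ[ℂ] PiTensorProduct ℂ V
  cond : ∀ y : ι,
    (fun a : Module.End ℂ W => S.conj a) '' (Dsets y) =
      Set.range (fun f : Module.End ℂ (V y) =>
        (PiTensorProduct.map
          (Function.update (fun k => (LinearMap.id : V k →ₗ[ℂ] V k)) y f) :
            Module.End ℂ (PiTensorProduct ℂ V)))

/-- The continuous linear map underlying a linear isometry equivalence. -/
def isomCLM {E F : Type*} [NormedAddCommGroup E] [NormedAddCommGroup F]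
    [NormedSpace ℂ E] [NormedSpace ℂ F] (e : E ≃ₗᵢ[ℂ] F) : E →L[ℂ] F :=
  e.toLinearIsometry.toContinuousLinearMap


set_option linter.unusedSectionVars false

section Statement5Aux

variable {n : ℕ} {Q : Type} [Fintype Q] {q0 : Q}

/-! ### Basic facts about `eVec`, `override`, `updateConf` -/

private lemma eVec_apply_self (c : Conf n Q q0) :
    (eVec c : ∀ _ : Conf n Q q0, ℂ) c = 1 := by
  letI : DecidableEq (Conf n Q q0) := Classical.decEq _
  rw [eVec]; exact lp.single_apply_self 2 c 1

private lemma eVec_apply_ne {c c' : Conf n Q q0} (h : c' ≠ c) :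
    (eVec c : ∀ _ : Conf n Q q0, ℂ) c' = 0 := by
  letI : DecidableEq (Conf n Q q0) := Classical.decEq _
  rw [eVec]; exact lp.single_apply_ne 2 c 1 h

private lemma override_apply_mem {D : Finset (Lat n)} (f : {x // x ∈ D} → Q)
    (c : Conf n Q q0) {x : Lat n} (hx : x ∈ D) :
    (override D f c).1 x = f ⟨x, hx⟩ := dif_pos hx

private lemma override_apply_not_mem {D : Finset (Lat n)} (f : {x // x ∈ D} → Q)
    (c : Conf n Q q0) {x : Lat n} (hx : x ∉ D) :
    (override D f c).1 x = c.1 x := dif_neg hx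

private lemma restrict_override {D : Finset (Lat n)} (f : {x // x ∈ D} → Q)
    (c : Conf n Q q0) :
    (fun x : {x // x ∈ D} => (override D f c).1 x.1) = f := by
  funext x
  rw [override_apply_mem f c x.2]

private lemma override_override {D : Finset (Lat n)} (f g : {x // x ∈ D} → Q)
    (c : Conf n Q q0) : override D f (override D g c) = override D f c := by
  apply Subtype.ext; funext x
  by_cases hx : x ∈ D
  · rw [override_apply_mem f _ hx, override_apply_mem f _ hx]
  · rw [override_apply_not_mem f _ hx, override_apply_not_mem f _ hx,
      override_apply_not_mem g _ hx]

private lemma override_restrict_self {D : Finset (Lat n)} {g : {x // x ∈ D} → Q}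
    {c : Conf n Q q0} (h : (fun x : {x // x ∈ D} => c.1 x.1) = g) :
    override D g c = c := by
  apply Subtype.ext; funext x
  by_cases hx : x ∈ D
  · rw [override_apply_mem g _ hx, ← h]
  · rw [override_apply_not_mem g _ hx]

private lemma updateConf_apply_self (y : Lat n) (r : Q) (c : Conf n Q q0) :
    (updateConf y r c).1 y = r := by
  show Function.update c.1 y r y = r
  simp

private lemma updateConf_apply_ne (y : Lat n) (r : Q) (c : Conf n Q q0)
    {x : Lat n} (hx : x ≠ y) : (updateConf y r c).1 x = c.1 x := by
  show Function.update c.1 y r x = c.1 x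
  exact Function.update_of_ne hx r c.1

private lemma updateConf_of_eq {y : Lat n} {r : Q} {c : Conf n Q q0} (h : c.1 y = r) :
    updateConf y r c = c := by
  apply Subtype.ext
  show Function.update c.1 y r = c.1
  rw [← h]; exact Function.update_eq_self y c.1

private lemma updateConf_idem (y : Lat n) (r s : Q) (c : Conf n Q q0) :
    updateConf y r (updateConf y s c) = updateConf y r c := by
  apply Subtype.ext
  show Function.update (Function.update c.1 y s) y r = Function.update c.1 y r
  exact Function.update_idem s r c.1

private lemma updateConf_override_comm {D : Finset (Lat n)} {y : Lat n} (hy : y ∉ D)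
    (r : Q) (f : {x // x ∈ D} → Q) (c : Conf n Q q0) :
    updateConf y r (override D f c) = override D f (updateConf y r c) := by
  apply Subtype.ext; funext x
  by_cases hxy : x = y
  · subst hxy
    rw [updateConf_apply_self, override_apply_not_mem f _ hy, updateConf_apply_self]
  · rw [updateConf_apply_ne _ _ _ hxy]
    by_cases hx : x ∈ D
    · rw [override_apply_mem f _ hx, override_apply_mem f _ hx]
    · rw [override_apply_not_mem f _ hx, override_apply_not_mem f _ hx,
        updateConf_apply_ne _ _ _ hxy]

private lemma override_singleton (y : Lat n) (g : {x // x ∈ ({y} : Finset (Lat n))} → Q)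
    (c : Conf n Q q0) :
    override {y} g c = updateConf y (g ⟨y, Finset.mem_singleton_self y⟩) c := by
  apply Subtype.ext; funext x
  by_cases hxy : x = y
  · subst hxy
    rw [override_apply_mem g _ (Finset.mem_singleton_self x), updateConf_apply_self]
  · rw [override_apply_not_mem g _ (fun h => hxy (Finset.mem_singleton.mp h)),
      updateConf_apply_ne _ _ _ hxy]

end Statement5Aux


section Statement5Op

variable {n : ℕ} {Q : Type} [Fintype Q] {q0 : Q}

open Classical in
/-- The raw action of the elementary operator `E_{f,g}` on a vector. -/
private def elemOpFun (q0 : Q) (D : Finset (Lat n)) (f g : {x // x ∈ D} → Q)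
    (v : H n Q q0) (c' : Conf n Q q0) : ℂ :=
  if (fun x : {x // x ∈ D} => c'.1 x.1) = f then
    (v : ∀ _ : Conf n Q q0, ℂ) (override D g c') else 0

private lemma override_inj_on_fiber {D : Finset (Lat n)} {f g : {x // x ∈ D} → Q}
    {a b : Conf n Q q0} (ha : (fun x : {x // x ∈ D} => a.1 x.1) = f)
    (hb : (fun x : {x // x ∈ D} => b.1 x.1) = f)
    (h : override D g a = override D g b) : a = b := by
  apply Subtype.ext; funext x
  by_cases hx : x ∈ D
  · have h1 : a.1 x = f ⟨x, hx⟩ := congrFun ha ⟨x, hx⟩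
    have h2 : b.1 x = f ⟨x, hx⟩ := congrFun hb ⟨x, hx⟩
    rw [h1, h2]
  · have := congrFun (congrArg Subtype.val h) x
    rwa [override_apply_not_mem g _ hx, override_apply_not_mem g _ hx] at this

private lemma elemOpFun_summable_bound (D : Finset (Lat n)) (f g : {x // x ∈ D} → Q)
    (v : H n Q q0) :
    Summable (fun c' => ‖elemOpFun q0 D f g v c'‖ ^ (2 : ℝ≥0∞).toReal) ∧
      ∑' c', ‖elemOpFun q0 D f g v c'‖ ^ (2 : ℝ≥0∞).toReal ≤
        ∑' c, ‖(v : ∀ _ : Conf n Q q0, ℂ) c‖ ^ (2 : ℝ≥0∞).toReal := by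
  classical
  have hp : 0 < (2 : ℝ≥0∞).toReal := by norm_num
  have hbase : Summable fun c : Conf n Q q0 =>
      ‖(v : ∀ _ : Conf n Q q0, ℂ) c‖ ^ (2 : ℝ≥0∞).toReal := (lp.memℓp v).summable hp
  set S : Set (Conf n Q q0) := {c' | (fun x : {x // x ∈ D} => c'.1 x.1) = f} with hS
  have hind : (fun c' => ‖elemOpFun q0 D f g v c'‖ ^ (2 : ℝ≥0∞).toReal)
      = S.indicator (fun c' =>
          ‖(v : ∀ _ : Conf n Q q0, ℂ) (override D g c')‖ ^ (2 : ℝ≥0∞).toReal) := by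
    funext c'
    by_cases h : (fun x : {x // x ∈ D} => c'.1 x.1) = f
    · rw [Set.indicator_of_mem (show c' ∈ S from h), elemOpFun, if_pos h]
    · rw [Set.indicator_of_notMem (show c' ∉ S from h), elemOpFun, if_neg h, norm_zero,
        Real.zero_rpow hp.ne']
  have hinj : Function.Injective (fun c' : S => override D g (c' : Conf n Q q0)) := by
    rintro ⟨a, haS⟩ ⟨b, hbS⟩ h
    exact Subtype.ext (override_inj_on_fiber haS hbS h)
  have hsub : Summable ((fun c : Conf n Q q0 =>
      ‖(v : ∀ _ : Conf n Q q0, ℂ) c‖ ^ (2 : ℝ≥0∞).toReal) ∘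
      fun c' : S => override D g (c' : Conf n Q q0)) :=
    hbase.comp_injective hinj
  have hsum : Summable (fun c' => ‖elemOpFun q0 D f g v c'‖ ^ (2 : ℝ≥0∞).toReal) := by
    rw [hind]
    exact summable_subtype_iff_indicator.mp hsub
  refine ⟨hsum, ?_⟩
  rw [hind, ← tsum_subtype]
  exact Summable.tsum_le_tsum_of_inj _ hinj
    (fun c _ => Real.rpow_nonneg (norm_nonneg _) _) (fun c' => le_rfl) hsub hbase

private def elemOpL (q0 : Q) (D : Finset (Lat n)) (f g : {x // x ∈ D} → Q) :
    H n Q q0 →ₗ[ℂ] H n Q q0 where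
  toFun v := ⟨elemOpFun q0 D f g v, memℓp_gen (elemOpFun_summable_bound D f g v).1⟩
  map_add' u v := by
    refine lp.ext (funext fun c' => ?_)
    show elemOpFun q0 D f g (u + v) c'
      = elemOpFun q0 D f g u c' + elemOpFun q0 D f g v c'
    classical
    simp only [elemOpFun, lp.coeFn_add, Pi.add_apply]
    split_ifs <;> simp
  map_smul' r v := by
    refine lp.ext (funext fun c' => ?_)
    show elemOpFun q0 D f g (r • v) c' = r * elemOpFun q0 D f g v c'
    classical
    simp only [elemOpFun, lp.coeFn_smul, Pi.smul_apply, smul_eq_mul]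
    split_ifs <;> simp

private def elemOp (q0 : Q) (D : Finset (Lat n)) (f g : {x // x ∈ D} → Q) :
    H n Q q0 →L[ℂ] H n Q q0 :=
  LinearMap.mkContinuous (elemOpL q0 D f g) 1 (fun v => by
    have hp : 0 < (2 : ℝ≥0∞).toReal := by norm_num
    rw [one_mul, lp.norm_eq_tsum_rpow hp, lp.norm_eq_tsum_rpow hp v]
    refine Real.rpow_le_rpow
      (tsum_nonneg fun _ => Real.rpow_nonneg (norm_nonneg _) _) ?_ (by positivity)
    exact (elemOpFun_summable_bound D f g v).2)

private lemma elemOp_apply_pos {D : Finset (Lat n)} {f : {x // x ∈ D} → Q}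
    (g : {x // x ∈ D} → Q) {c' : Conf n Q q0}
    (h : (fun x : {x // x ∈ D} => c'.1 x.1) = f) (v : H n Q q0) :
    (elemOp q0 D f g v : ∀ _ : Conf n Q q0, ℂ) c'
      = (v : ∀ _ : Conf n Q q0, ℂ) (override D g c') := by
  show elemOpFun q0 D f g v c' = _
  rw [elemOpFun, if_pos h]

private lemma elemOp_apply_neg {D : Finset (Lat n)} {f : {x // x ∈ D} → Q}
    (g : {x // x ∈ D} → Q) {c' : Conf n Q q0}
    (h : ¬ (fun x : {x // x ∈ D} => c'.1 x.1) = f) (v : H n Q q0) :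
    (elemOp q0 D f g v : ∀ _ : Conf n Q q0, ℂ) c' = 0 := by
  show elemOpFun q0 D f g v c' = _
  rw [elemOpFun, if_neg h]

open Classical in
private lemma elemOp_eVec (D : Finset (Lat n)) (f g : {x // x ∈ D} → Q)
    (c : Conf n Q q0) :
    elemOp q0 D f g (eVec c) =
      (if (fun x : {x // x ∈ D} => c.1 x.1) = g then eVec (override D f c)
        else (0 : H n Q q0)) := by
  classical
  refine lp.ext (funext fun c' => ?_)
  by_cases hf : (fun x : {x // x ∈ D} => c'.1 x.1) = f
  · rw [elemOp_apply_pos g hf]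
    by_cases hc : override D g c' = c
    · have hrg : (fun x : {x // x ∈ D} => c.1 x.1) = g := by
        rw [← hc]; exact restrict_override g c'
      have hc' : override D f c = c' := by
        rw [← hc, override_override, override_restrict_self hf]
      rw [if_pos hrg, hc, eVec_apply_self, hc', eVec_apply_self]
    · rw [eVec_apply_ne hc]
      by_cases hrg : (fun x : {x // x ∈ D} => c.1 x.1) = g
      · rw [if_pos hrg]
        have : c' ≠ override D f c := by
          intro h
          apply hc
          rw [h, override_override, override_restrict_self hrg]
        rw [eVec_apply_ne this]
      · rw [if_neg hrg]
        rfl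
  · rw [elemOp_apply_neg g hf]
    by_cases hrg : (fun x : {x // x ∈ D} => c.1 x.1) = g
    · rw [if_pos hrg]
      have : c' ≠ override D f c := by
        intro h
        apply hf
        rw [h]; exact restrict_override f c
      rw [eVec_apply_ne this]
    · rw [if_neg hrg]
      rfl

/-- The bounded operator with kernel `a` local upon `D`. -/
private def AOp (q0 : Q) (D : Finset (Lat n))
    (a : ({x // x ∈ D} → Q) → ({x // x ∈ D} → Q) → ℂ) : H n Q q0 →L[ℂ] H n Q q0 :=
  ∑ f : {x // x ∈ D} → Q, ∑ g : {x // x ∈ D} → Q, a f g • elemOp q0 D f g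

private lemma lp_sum_apply {ι : Type*} (s : Finset ι) (F : ι → H n Q q0)
    (c' : Conf n Q q0) :
    ((∑ i ∈ s, F i : H n Q q0) : ∀ _ : Conf n Q q0, ℂ) c'
      = ∑ i ∈ s, (F i : ∀ _ : Conf n Q q0, ℂ) c' := by
  rw [lp.coeFn_sum, Finset.sum_apply]

private lemma AOp_apply (D : Finset (Lat n))
    (a : ({x // x ∈ D} → Q) → ({x // x ∈ D} → Q) → ℂ) (v : H n Q q0)
    (c' : Conf n Q q0) :
    (AOp q0 D a v : ∀ _ : Conf n Q q0, ℂ) c' =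
      ∑ g : {x // x ∈ D} → Q, a (fun x : {x // x ∈ D} => c'.1 x.1) g *
        (v : ∀ _ : Conf n Q q0, ℂ) (override D g c') := by
  classical
  rw [AOp]
  simp only [ContinuousLinearMap.sum_apply, ContinuousLinearMap.smul_apply]
  rw [lp_sum_apply]
  rw [Finset.sum_eq_single (fun x : {x // x ∈ D} => c'.1 x.1)]
  · rw [lp_sum_apply]
    refine Finset.sum_congr rfl fun g _ => ?_
    rw [lp.coeFn_smul, Pi.smul_apply, smul_eq_mul, elemOp_apply_pos g rfl]
  · intro f _ hf
    rw [lp_sum_apply]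
    refine Finset.sum_eq_zero fun g _ => ?_
    rw [lp.coeFn_smul, Pi.smul_apply, smul_eq_mul,
      elemOp_apply_neg g (fun h => hf h.symm), mul_zero]
  · intro h
    exact absurd (Finset.mem_univ _) h

private lemma AOp_eVec (D : Finset (Lat n))
    (a : ({x // x ∈ D} → Q) → ({x // x ∈ D} → Q) → ℂ) (c : Conf n Q q0) :
    AOp q0 D a (eVec c) = ∑ f : {x // x ∈ D} → Q,
      a f (fun x : {x // x ∈ D} => c.1 x.1) • eVec (override D f c) := by
  classical
  rw [AOp]
  simp only [ContinuousLinearMap.sum_apply, ContinuousLinearMap.smul_apply]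
  refine Finset.sum_congr rfl fun f _ => ?_
  rw [Finset.sum_eq_single (fun x : {x // x ∈ D} => c.1 x.1)]
  · rw [elemOp_eVec, if_pos rfl]
  · intro g _ hg
    rw [elemOp_eVec, if_neg (fun h => hg h.symm), smul_zero]
  · intro h
    exact absurd (Finset.mem_univ _) h

private lemma isLocalUpon_AOp (D : Finset (Lat n))
    (a : ({x // x ∈ D} → Q) → ({x // x ∈ D} → Q) → ℂ) :
    IsLocalUpon q0 D (AOp q0 D a) :=
  ⟨a, fun c => AOp_eVec D a c⟩

/-- Two bounded operators agreeing on all basis vectors are equal. -/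
private lemma clm_ext_eVec {L R : H n Q q0 →L[ℂ] H n Q q0}
    (h : ∀ c, L (eVec c) = R (eVec c)) : L = R := by
  classical
  refine ContinuousLinearMap.ext fun v => ?_
  have hv : HasSum (fun c : Conf n Q q0 =>
      lp.single 2 c ((v : ∀ _ : Conf n Q q0, ℂ) c)) v :=
    lp.hasSum_single (by norm_num) v
  have key : ∀ c : Conf n Q q0, lp.single 2 c ((v : ∀ _ : Conf n Q q0, ℂ) c)
      = ((v : ∀ _ : Conf n Q q0, ℂ) c) • eVec c := fun c => by
    refine lp.ext (funext fun j => ?_)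
    by_cases hj : j = c
    · subst hj
      rw [lp.single_apply_self]
      rw [lp.coeFn_smul, Pi.smul_apply, eVec_apply_self, smul_eq_mul, mul_one]
    · rw [lp.single_apply_ne 2 c _ hj]
      rw [lp.coeFn_smul, Pi.smul_apply, eVec_apply_ne hj, smul_eq_mul, mul_zero]
  have hL := hv.mapL L
  have hR := hv.mapL R
  have heq : (fun c : Conf n Q q0 => L (lp.single 2 c ((v : ∀ _ : Conf n Q q0, ℂ) c)))
      = fun c => R (lp.single 2 c ((v : ∀ _ : Conf n Q q0, ℂ) c)) := by
    funext c
    rw [key c, map_smul, map_smul, h c]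
  exact hL.unique (heq ▸ hR)

end Statement5Op


section Statement5More

variable {n : ℕ} {Q : Type} [Fintype Q] {q0 : Q}

private lemma override_comm {D E : Finset (Lat n)} (hDE : ∀ x, x ∈ D → x ∉ E)
    (f : {x // x ∈ D} → Q) (g : {x // x ∈ E} → Q) (c : Conf n Q q0) :
    override E g (override D f c) = override D f (override E g c) := by
  apply Subtype.ext; funext x
  by_cases hxE : x ∈ E
  · have hxD : x ∉ D := fun h => hDE x h hxE
    rw [override_apply_mem g _ hxE, override_apply_not_mem f _ hxD,
      override_apply_mem g _ hxE]
  · rw [override_apply_not_mem g _ hxE]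
    by_cases hxD : x ∈ D
    · rw [override_apply_mem f _ hxD, override_apply_mem f _ hxD]
    · rw [override_apply_not_mem f _ hxD, override_apply_not_mem f _ hxD,
        override_apply_not_mem g _ hxE]

private lemma sum_funUnique {α : Type} [Fintype α] [Unique α] [DecidableEq α]
    (F : (α → Q) → ℂ) :
    ∑ f : α → Q, F f = ∑ r : Q, F (fun _ => r) := by
  refine Fintype.sum_equiv (Equiv.funUnique α Q) _ _ fun f => ?_
  exact congrArg F (funext fun z => congrArg f (Subsingleton.elim z default))

end Statement5More


/-- Commutant characterization of locality. `T` is local upon `D` if and only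
if it commutes with every bounded operator local upon a single cell outside of `D`. -/
theorem isLocalUpon_iff_commutes_with_outside
    (n : ℕ) (hn : 1 ≤ n) (Q : Type) [Fintype Q] (q₀ : Q)
    (D : Finset (Lat n)) (T : H n Q q₀ →L[ℂ] H n Q q₀) :
    IsLocalUpon q₀ D T ↔
      ∀ A : H n Q q₀ →L[ℂ] H n Q q₀,
        (∃ y : Lat n, y ∉ D ∧ IsLocalUpon q₀ {y} A) → A ∘L T = T ∘L A := by
  constructor
  · rintro ⟨a, ha⟩ A ⟨y, hy, b, hb⟩
    have hDy : ∀ x, x ∈ D → x ∉ ({y} : Finset (Lat n)) := by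
      intro x hx h
      exact hy ((Finset.mem_singleton.mp h) ▸ hx)
    refine clm_ext_eVec fun c => ?_
    rw [ContinuousLinearMap.comp_apply, ContinuousLinearMap.comp_apply, ha c, hb c,
      map_sum, map_sum]
    have h1 : ∀ f : {x // x ∈ D} → Q,
        (fun x : {x // x ∈ ({y} : Finset (Lat n))} => (override D f c).1 x.1)
          = fun x : {x // x ∈ ({y} : Finset (Lat n))} => c.1 x.1 := by
      intro f
      funext x
      exact override_apply_not_mem f c (fun h => hDy x.1 h x.2)
    have h2 : ∀ g : {x // x ∈ ({y} : Finset (Lat n))} → Q,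
        (fun x : {x // x ∈ D} => (override {y} g c).1 x.1)
          = fun x : {x // x ∈ D} => c.1 x.1 := by
      intro g
      funext x
      exact override_apply_not_mem g c (hDy x.1 x.2)
    calc
      ∑ f : {x // x ∈ D} → Q,
          A (a f (fun x : {x // x ∈ D} => c.1 x.1) • eVec (override D f c))
        = ∑ f : {x // x ∈ D} → Q, ∑ g : {x // x ∈ ({y} : Finset (Lat n))} → Q,
            b g (fun x : {x // x ∈ ({y} : Finset (Lat n))} => c.1 x.1) •
              (a f (fun x : {x // x ∈ D} => c.1 x.1) •
                eVec (override D f (override {y} g c))) := by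
          refine Finset.sum_congr rfl fun f _ => ?_
          rw [map_smul, hb, Finset.smul_sum]
          refine Finset.sum_congr rfl fun g _ => ?_
          rw [h1 f, override_comm hDy f g c, smul_comm]
      _ = ∑ g : {x // x ∈ ({y} : Finset (Lat n))} → Q,
            T (b g (fun x : {x // x ∈ ({y} : Finset (Lat n))} => c.1 x.1) •
              eVec (override {y} g c)) := by
          rw [Finset.sum_comm]
          refine Finset.sum_congr rfl fun g _ => ?_
          rw [map_smul, ha, Finset.smul_sum]
          refine Finset.sum_congr rfl fun f _ => ?_
          rw [h2 g]
  · intro hcomm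
    classical
    -- The fundamental constraint coming from commutation with one-cell operators.
    have star : ∀ y : Lat n, y ∉ D → ∀ (r0 s0 : Q) (c c' : Conf n Q q₀),
        (if c'.1 y = r0
          then (T (eVec c) : ∀ _ : Conf n Q q₀, ℂ) (updateConf y s0 c') else 0)
        = (if c.1 y = s0
          then (T (eVec (updateConf y r0 c)) : ∀ _ : Conf n Q q₀, ℂ) c' else 0) := by
      intro y hy r0 s0 c c'
      haveI : Unique {x // x ∈ ({y} : Finset (Lat n))} :=
        ⟨⟨⟨y, Finset.mem_singleton_self y⟩⟩,
          fun z => Subtype.ext (Finset.mem_singleton.mp z.2)⟩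
      set bb : ({x // x ∈ ({y} : Finset (Lat n))} → Q) →
          ({x // x ∈ ({y} : Finset (Lat n))} → Q) → ℂ :=
        fun f g => (if f ⟨y, Finset.mem_singleton_self y⟩ = r0 then (1 : ℂ) else 0) *
          (if g ⟨y, Finset.mem_singleton_self y⟩ = s0 then (1 : ℂ) else 0) with hbb
      have hcm := hcomm (AOp q₀ {y} bb) ⟨y, hy, isLocalUpon_AOp {y} bb⟩
      have hce : AOp q₀ {y} bb (T (eVec c)) = T (AOp q₀ {y} bb (eVec c)) := by
        have := DFunLike.congr_fun hcm (eVec c)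
        simpa using this
      have hpt := congrFun (congrArg
        (fun w : H n Q q₀ => (w : ∀ _ : Conf n Q q₀, ℂ)) hce) c'
      have hover : ∀ (d : Conf n Q q₀) (r : Q),
          override ({y} : Finset (Lat n)) (fun _ => r) d = updateConf y r d := fun d r =>
        override_singleton y (fun _ => r) d
      have L1 : (AOp q₀ {y} bb (T (eVec c)) : ∀ _ : Conf n Q q₀, ℂ) c'
          = if c'.1 y = r0
            then (T (eVec c) : ∀ _ : Conf n Q q₀, ℂ) (updateConf y s0 c') else 0 := by
        rw [AOp_apply, sum_funUnique]
        rw [Finset.sum_eq_single s0]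
        · simp only [hover, hbb, boole_mul]
          simp
        · intro r _ hr
          simp [hbb, hr]
        · intro h
          exact absurd (Finset.mem_univ _) h
      have R1 : (T (AOp q₀ {y} bb (eVec c)) : ∀ _ : Conf n Q q₀, ℂ) c'
          = if c.1 y = s0
            then (T (eVec (updateConf y r0 c)) : ∀ _ : Conf n Q q₀, ℂ) c' else 0 := by
        rw [AOp_eVec, map_sum, lp_sum_apply]
        simp only [map_smul, lp.coeFn_smul, Pi.smul_apply, smul_eq_mul]
        rw [sum_funUnique]
        rw [Finset.sum_eq_single r0]
        · simp only [hover, hbb, boole_mul]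
          simp
        · intro r _ hr
          simp [hbb, hr]
        · intro h
          exact absurd (Finset.mem_univ _) h
      rw [← L1, ← R1]
      exact hpt
    have vanish : ∀ y : Lat n, y ∉ D → ∀ (c c' : Conf n Q q₀), c'.1 y ≠ c.1 y →
        (T (eVec c) : ∀ _ : Conf n Q q₀, ℂ) c' = 0 := by
      intro y hy c c' hne
      have h := star y hy (c.1 y) (c.1 y) c c'
      rw [if_neg hne, if_pos rfl, updateConf_of_eq rfl] at h
      exact h.symm
    have invar : ∀ y : Lat n, y ∉ D → ∀ (r s : Q) (d' d : Conf n Q q₀),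
        (T (eVec (updateConf y s d)) : ∀ _ : Conf n Q q₀, ℂ) (updateConf y s d')
          = (T (eVec (updateConf y r d)) : ∀ _ : Conf n Q q₀, ℂ) (updateConf y r d') := by
      intro y hy r s d' d
      have h := star y hy r s (updateConf y s d) (updateConf y r d')
      rw [if_pos (updateConf_apply_self y r d'), if_pos (updateConf_apply_self y s d),
        updateConf_idem, updateConf_idem] at h
      exact h
    have claim : ∀ (k : ℕ) (c : Conf n Q q₀), (suppF c \ D).card = k →
        ∀ f : {x // x ∈ D} → Q,
        (T (eVec c) : ∀ _ : Conf n Q q₀, ℂ) (override D f c)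
          = (T (eVec (override D (fun x : {x // x ∈ D} => c.1 x.1) (c0 n Q q₀)))
              : ∀ _ : Conf n Q q₀, ℂ)
              (override D f (override D (fun x : {x // x ∈ D} => c.1 x.1) (c0 n Q q₀))) := by
      intro k
      induction k with
      | zero =>
        intro c hc f
        have hemp : suppF c \ D = ∅ := Finset.card_eq_zero.mp hc
        have hq : ∀ x, x ∉ D → c.1 x = q₀ := by
          intro x hxD
          by_contra hne
          have hxs : x ∈ suppF c \ D := Finset.mem_sdiff.mpr
            ⟨(Set.Finite.mem_toFinset c.2).mpr hne, hxD⟩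
          rw [hemp] at hxs
          exact absurd hxs (Finset.notMem_empty x)
        have hc' : c = override D (fun x : {x // x ∈ D} => c.1 x.1) (c0 n Q q₀) := by
          apply Subtype.ext; funext x
          by_cases hx : x ∈ D
          · rw [override_apply_mem _ _ hx]
          · rw [override_apply_not_mem _ _ hx]
            exact hq x hx
        conv_lhs => rw [hc']
      | succ k ih =>
        intro c hc f
        obtain ⟨y, hymem⟩ := Finset.card_pos.mp (by rw [hc]; exact Nat.succ_pos k)
        have hyD : y ∉ D := (Finset.mem_sdiff.mp hymem).2
        have step := invar y hyD q₀ (c.1 y) (override D f c) c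
        rw [updateConf_of_eq (override_apply_not_mem f c hyD),
          updateConf_of_eq (rfl : c.1 y = c.1 y),
          updateConf_override_comm hyD q₀ f c] at step
        have hres : (fun x : {x // x ∈ D} => (updateConf y q₀ c).1 x.1)
            = fun x : {x // x ∈ D} => c.1 x.1 :=
          funext fun x => updateConf_apply_ne y q₀ c (fun h => hyD (h ▸ x.2))
        have hcard : (suppF (updateConf y q₀ c) \ D).card = k := by
          have hset : suppF (updateConf y q₀ c) \ D = (suppF c \ D).erase y := by
            ext x
            simp only [Finset.mem_erase, Finset.mem_sdiff, suppF, Set.Finite.mem_toFinset,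
              Set.mem_setOf_eq]
            constructor
            · rintro ⟨hx1, hx2⟩
              have hxy : x ≠ y := by
                rintro rfl
                exact hx1 (updateConf_apply_self x q₀ c)
              rw [updateConf_apply_ne y q₀ c hxy] at hx1
              exact ⟨hxy, hx1, hx2⟩
            · rintro ⟨hxy, hx1, hx2⟩
              rw [updateConf_apply_ne y q₀ c hxy]
              exact ⟨hx1, hx2⟩
          rw [hset, Finset.card_erase_of_mem hymem, hc]
          omega
        rw [step, ih (updateConf y q₀ c) hcard f, hres]
    refine ⟨fun f g => (T (eVec (override D g (c0 n Q q₀))) : ∀ _ : Conf n Q q₀, ℂ)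
      (override D f (override D g (c0 n Q q₀))), fun c => ?_⟩
    refine lp.ext (funext fun c' => ?_)
    beta_reduce
    rw [lp_sum_apply]
    simp only [lp.coeFn_smul, Pi.smul_apply, smul_eq_mul]
    by_cases hag : ∀ x, x ∉ D → c'.1 x = c.1 x
    · obtain ⟨F, hF⟩ : ∃ F : {x // x ∈ D} → Q,
          (fun x : {x // x ∈ D} => c'.1 x.1) = F := ⟨_, rfl⟩
      have hc' : c' = override D F c := by
        apply Subtype.ext; funext x
        by_cases hx : x ∈ D
        · rw [override_apply_mem _ _ hx, ← hF]
        · rw [override_apply_not_mem _ _ hx]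
          exact hag x hx
      rw [Finset.sum_eq_single F]
      · rw [hc', eVec_apply_self, mul_one]
        exact claim ((suppF c \ D).card) c rfl F
      · intro f _ hfne
        have hne : c' ≠ override D f c := by
          intro h
          apply hfne
          rw [h, restrict_override] at hF
          exact hF
        rw [eVec_apply_ne hne, mul_zero]
      · intro h
        exact absurd (Finset.mem_univ _) h
    · push_neg at hag
      obtain ⟨y, hyD, hne⟩ := hag
      rw [vanish y hyD c c' hne]
      refine (Finset.sum_eq_zero fun f _ => ?_).symm
      have hcne : c' ≠ override D f c := by
        intro h
        apply hne
        rw [h]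
        exact override_apply_not_mem f c hyD
      rw [eVec_apply_ne hcne, mul_zero]

end QCA
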